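/- Let Λ be a right noetherian ring. Then Λ is right artinian if and only if for every torsion-free class ℱ of the category of finitely generated right Λ-modules there exists a class 𝒯 of finitely generated right Λ-modules such that (𝒯, ℱ) is a torsion pair in mod Λ. -/

import Mathlib

universe u

section Defs

variable (A : Type u) [Ring A]

/-- `C` is a subcategory of `mod A`: it is closed under isomorphisms, contains the zero
modules, and consists of finitely generated modules. -/
def IsModSubcat (C : Set (ModuleCat.{u} A)) : Prop :=
  (∀ M N : ModuleCat.{u} A, (M ≃ₗ[A] N) → M ∈ C → N ∈ C) ∧
  (∀ M : ModuleCat.{u} A, Subsingleton M → M ∈ C) ∧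
  (∀ M ∈ C, Module.Finite A M)

/-- `C` is closed under submodules. -/
def SubmoduleClosed (C : Set (ModuleCat.{u} A)) : Prop :=
  ∀ M ∈ C, ∀ N : Submodule A M, ModuleCat.of A N ∈ C

/-- `C` is closed under quotient modules. -/
def QuotClosed (C : Set (ModuleCat.{u} A)) : Prop :=
  ∀ M ∈ C, ∀ N : Submodule A M, ModuleCat.of A (M ⧸ N) ∈ C

/-- `C` is closed under images: for every `A`-linear map `f : C₁ → C₂` with `C₁, C₂ ∈ C`,
the image of `f` belongs to `C`. -/
def ImagesClosed (C : Set (ModuleCat.{u} A)) : Prop :=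
  ∀ M₁ ∈ C, ∀ M₂ ∈ C, ∀ f : M₁ →ₗ[A] M₂, ModuleCat.of A (LinearMap.range f) ∈ C

/-- `C` is closed under kernels: for every `A`-linear map `f : C₁ → C₂` with `C₁, C₂ ∈ C`,
the kernel of `f` belongs to `C`. -/
def KernelsClosed (C : Set (ModuleCat.{u} A)) : Prop :=
  ∀ M₁ ∈ C, ∀ M₂ ∈ C, ∀ f : M₁ →ₗ[A] M₂, ModuleCat.of A (LinearMap.ker f) ∈ C

/-- `C` is closed under extensions: for every short exact sequence
`0 → L → M → N → 0` of finitely generated modules with `L, N ∈ C`, we have `M ∈ C`. -/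
def ExtClosed (C : Set (ModuleCat.{u} A)) : Prop :=
  ∀ (L M N : ModuleCat.{u} A), Module.Finite A M →
    ∀ (f : L →ₗ[A] M) (g : M →ₗ[A] N),
      Function.Injective f → Function.Surjective g →
      LinearMap.range f = LinearMap.ker g →
      L ∈ C → N ∈ C → M ∈ C

end Defs

set_option maxHeartbeats 1000000 in
set_option synthInstance.maxHeartbeats 1000000 in
theorem artinian_iff_every_torsionFree_class_is_strong
    (Λ : Type u) [Ring Λ] [IsNoetherianRing Λᵐᵒᵖ] :
    IsArtinianRing Λᵐᵒᵖ ↔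
      ∀ F : Set (ModuleCat.{u} Λᵐᵒᵖ), IsModSubcat Λᵐᵒᵖ F →
        SubmoduleClosed Λᵐᵒᵖ F → ExtClosed Λᵐᵒᵖ F →
        ∃ T : Set (ModuleCat.{u} Λᵐᵒᵖ), IsModSubcat Λᵐᵒᵖ T ∧
          (∀ X ∈ T, ∀ Y ∈ F, ∀ f : X →ₗ[Λᵐᵒᵖ] Y, f = 0) ∧
          (∀ X : ModuleCat.{u} Λᵐᵒᵖ, Module.Finite Λᵐᵒᵖ X →
            ∃ N : Submodule Λᵐᵒᵖ X,
              ModuleCat.of Λᵐᵒᵖ N ∈ T ∧ ModuleCat.of Λᵐᵒᵖ (X ⧸ N) ∈ F) := by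
  constructor
  · -- Forward direction
    intro hart F hmodF hsubF hextF
    haveI : IsArtinianRing Λᵐᵒᵖ := hart
    refine ⟨{X : ModuleCat.{u} Λᵐᵒᵖ | Module.Finite Λᵐᵒᵖ X ∧
        ∀ Y ∈ F, ∀ f : X →ₗ[Λᵐᵒᵖ] Y, f = 0}, ⟨?_, ?_, ?_⟩, ?_, ?_⟩
    · -- iso closed
      intro M N e hM
      refine ⟨by haveI := hM.1; exact Module.Finite.equiv e, fun Y hY f => ?_⟩
      have h0 := hM.2 Y hY (f.comp (e : M →ₗ[Λᵐᵒᵖ] N))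
      ext x
      have : f (e (e.symm x)) = 0 := by
        have := congrArg (fun g : M →ₗ[Λᵐᵒᵖ] Y => g (e.symm x)) h0
        simpa using this
      simpa using this
    · -- zero modules
      intro M hM
      refine ⟨by haveI := hM; infer_instance, fun Y hY f => ?_⟩
      ext x
      rw [Subsingleton.elim x 0, map_zero]; rfl
    · intro M hM; exact hM.1
    · -- Hom vanishing
      intro X hX Y hY f; exact hX.2 Y hY f
    · -- torsion submodule
      intro X hXfin
      haveI := hXfin
      haveI : IsNoetherian Λᵐᵒᵖ X := inferInstance
      haveI : IsArtinian Λᵐᵒᵖ X := inferInstance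
      obtain ⟨P, hPS, hPmin⟩ := IsArtinian.set_has_minimal
        {P : Submodule Λᵐᵒᵖ X | ModuleCat.of Λᵐᵒᵖ (X ⧸ P) ∈ F}
        ⟨⊤, hmodF.2.1 _ (Submodule.Quotient.subsingleton_iff.mpr rfl)⟩
      refine ⟨P, ⟨Module.Finite.iff_fg.mpr (IsNoetherian.noetherian P), fun Y hY f => ?_⟩, hPS⟩
      by_contra hf0
      set K : Submodule Λᵐᵒᵖ P := LinearMap.ker f with hK
      set K' : Submodule Λᵐᵒᵖ X := Submodule.map P.subtype K with hK'
      have hK'P : K' ≤ P := Submodule.map_subtype_le P K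
      have hK'lt : K' < P := by
        refine lt_of_le_of_ne hK'P fun he => hf0 ?_
        have hKtop : K = ⊤ := by
          rw [eq_top_iff]
          rintro ⟨x, hxP⟩ -
          have hx : x ∈ K' := he ▸ hxP
          obtain ⟨y, hy, hyx⟩ := hx
          have hyy : y = ⟨x, hxP⟩ := Subtype.ext hyx
          rwa [← hyy]
        exact LinearMap.ker_eq_top.mp hKtop
      -- show K' belongs to the defining set, contradicting minimality
      refine hPmin K' ?_ hK'lt
      -- L = P ⧸ K is in F (isomorphic to range f)
      have hLF : ModuleCat.of Λᵐᵒᵖ (P ⧸ K) ∈ F := by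
        have hr := hsubF Y hY (LinearMap.range f)
        exact hmodF.1 _ _ (f.quotKerEquivRange).symm hr
      -- exact sequence 0 → P⧸K → X⧸K' → X⧸P → 0
      have hle : K ≤ LinearMap.ker ((K'.mkQ).comp P.subtype) := by
        intro x hx
        simp only [LinearMap.mem_ker, LinearMap.comp_apply, Submodule.mkQ_apply,
          Submodule.Quotient.mk_eq_zero]
        exact Submodule.mem_map_of_mem hx
      set φ : (P ⧸ K) →ₗ[Λᵐᵒᵖ] (X ⧸ K') := K.liftQ ((K'.mkQ).comp P.subtype) hle with hφ
      have hψle : K' ≤ Submodule.comap (LinearMap.id : X →ₗ[Λᵐᵒᵖ] X) P := by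
        simpa using hK'P
      set ψ : (X ⧸ K') →ₗ[Λᵐᵒᵖ] (X ⧸ P) := Submodule.mapQ K' P LinearMap.id hψle with hψ
      have hφinj : Function.Injective φ := by
        rw [← LinearMap.ker_eq_bot, hφ, Submodule.ker_liftQ]
        have hker : LinearMap.ker ((K'.mkQ).comp P.subtype) = K := by
          ext x
          simp only [LinearMap.mem_ker, LinearMap.comp_apply, Submodule.mkQ_apply,
            Submodule.Quotient.mk_eq_zero, hK']
          constructor
          · rintro ⟨y, hy, hyx⟩
            have : y = x := Subtype.ext hyx
            rwa [← this]
          · intro hx; exact Submodule.mem_map_of_mem hx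
        rw [hker]
        rw [eq_bot_iff]
        rintro z ⟨x, hx, rfl⟩
        simpa [Submodule.Quotient.mk_eq_zero] using hx
      have hψsurj : Function.Surjective ψ := by
        intro y
        obtain ⟨x, rfl⟩ := Submodule.Quotient.mk_surjective P y
        exact ⟨Submodule.Quotient.mk x, by simp [hψ, Submodule.mapQ_apply]⟩
      have hrangeker : LinearMap.range φ = LinearMap.ker ψ := by
        ext z
        obtain ⟨x, rfl⟩ := Submodule.Quotient.mk_surjective K' z
        simp only [LinearMap.mem_range, LinearMap.mem_ker, hψ, Submodule.mapQ_apply,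
          LinearMap.id_apply, Submodule.Quotient.mk_eq_zero]
        constructor
        · rintro ⟨w, hw⟩
          obtain ⟨v, rfl⟩ := Submodule.Quotient.mk_surjective K w
          have : (Submodule.Quotient.mk (v : X) : X ⧸ K') = Submodule.Quotient.mk x := by
            simpa [hφ, Submodule.liftQ_apply] using hw
          have hd : (x - (v : X)) ∈ K' := (Submodule.Quotient.eq K').mp this.symm
          have : x - (v : X) ∈ P := hK'P hd
          have := P.add_mem this v.2
          simpa using this
        · intro hx
          refine ⟨Submodule.Quotient.mk ⟨x, hx⟩, ?_⟩
          simp [hφ, Submodule.liftQ_apply]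
      have hfinq : Module.Finite Λᵐᵒᵖ (X ⧸ K') := Module.Finite.quotient _ _
      exact hextF (ModuleCat.of Λᵐᵒᵖ (P ⧸ K)) (ModuleCat.of Λᵐᵒᵖ (X ⧸ K'))
        (ModuleCat.of Λᵐᵒᵖ (X ⧸ P)) hfinq φ ψ hφinj hψsurj hrangeker hLF hPS
  · -- Reverse direction
    intro h
    obtain ⟨T, hTsub, hTF, hTseq⟩ := h
      {M : ModuleCat.{u} Λᵐᵒᵖ | Module.Finite Λᵐᵒᵖ M ∧ IsArtinian Λᵐᵒᵖ M}
      ⟨fun M N e hM => by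
          haveI := hM.1; haveI := hM.2
          exact ⟨Module.Finite.equiv e, isArtinian_of_linearEquiv e⟩,
        fun M hM => by haveI := hM; exact ⟨inferInstance, inferInstance⟩,
        fun M hM => hM.1⟩
      (fun M hM N => by
        haveI := hM.1; haveI := hM.2
        haveI : IsNoetherian Λᵐᵒᵖ M := inferInstance
        have h1 : Module.Finite Λᵐᵒᵖ N := Module.Finite.iff_fg.mpr (IsNoetherian.noetherian N)
        have h2 : IsArtinian Λᵐᵒᵖ N := inferInstance
        exact ⟨h1, h2⟩)
      (fun L M N hMfin f g hf hg hr hL hN => by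
        haveI := hL.2; haveI := hN.2
        exact ⟨hMfin, isArtinian_of_range_eq_ker f g hr⟩)
    obtain ⟨N, hNT, hNQ⟩ := hTseq (ModuleCat.of Λᵐᵒᵖ Λᵐᵒᵖ) (Module.Finite.self Λᵐᵒᵖ)
    have hNbot : N = ⊥ := by
      by_contra hne
      haveI : Nontrivial N := Submodule.nontrivial_iff_ne_bot.mpr hne
      haveI hamb : IsNoetherian Λᵐᵒᵖ (ModuleCat.of Λᵐᵒᵖ Λᵐᵒᵖ) := ‹IsNoetherianRing Λᵐᵒᵖ›
      haveI hNnoe : IsNoetherian Λᵐᵒᵖ N := isNoetherian_submodule' N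
      obtain ⟨N', hN'mem, hN'max⟩ := set_has_maximal_iff_noetherian.mpr hNnoe
        {Q : Submodule Λᵐᵒᵖ N | Q ≠ ⊤} ⟨⊥, bot_ne_top⟩
      have hco : IsCoatom N' := by
        refine ⟨hN'mem, fun b hb => ?_⟩
        by_contra hbtop
        exact hN'max b hbtop hb
      haveI hsimp : IsSimpleModule Λᵐᵒᵖ (N ⧸ N') := isSimpleModule_iff_isCoatom.mpr hco
      have hQF : ModuleCat.of Λᵐᵒᵖ (N ⧸ N') ∈
          {M : ModuleCat.{u} Λᵐᵒᵖ | Module.Finite Λᵐᵒᵖ M ∧ IsArtinian Λᵐᵒᵖ M} := by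
        haveI : Module.Finite Λᵐᵒᵖ N :=
          Module.Finite.iff_fg.mpr (IsNoetherian.noetherian N)
        have h1 : Module.Finite Λᵐᵒᵖ (N ⧸ N') := Module.Finite.quotient _ _
        have h2 : IsArtinian Λᵐᵒᵖ (N ⧸ N') := inferInstance
        exact ⟨h1, h2⟩
      have h0 := hTF _ hNT _ hQF N'.mkQ
      haveI : Nontrivial (N ⧸ N') := Submodule.Quotient.nontrivial_iff.mpr hco.1
      obtain ⟨a, b, hab⟩ := exists_pair_ne (N ⧸ N')
      obtain ⟨x, rfl⟩ := Submodule.Quotient.mk_surjective N' a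
      obtain ⟨y, rfl⟩ := Submodule.Quotient.mk_surjective N' b
      apply hab
      have hx := congrArg (fun g : N →ₗ[Λᵐᵒᵖ] (N ⧸ N') => g x) h0
      have hy := congrArg (fun g : N →ₗ[Λᵐᵒᵖ] (N ⧸ N') => g y) h0
      simp only [Submodule.mkQ_apply, LinearMap.zero_apply] at hx hy
      rw [hx, hy]
    rw [hNbot] at hNQ
    haveI : IsArtinian Λᵐᵒᵖ (Λᵐᵒᵖ ⧸ (⊥ : Submodule Λᵐᵒᵖ Λᵐᵒᵖ)) := hNQ.2
    exact isArtinian_of_linearEquiv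
      (Submodule.quotEquivOfEqBot (⊥ : Submodule Λᵐᵒᵖ Λᵐᵒᵖ) rfl)
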